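/- Let β > 0 and κ > 0, and let φ : [0,1] → ℝ be a C² function satisfying φ''(x) = β⁻² sin(φ(x)) cos(φ(x)) for all x ∈ (0,1), together with φ(0) = 0 and φ'(1) = 2κ. Then for every x ∈ [0,1] one has φ'(x)² = β⁻² sin²(φ(x)) + φ'(0)², moreover φ'(0) ≠ 0 and φ'(x) > 0 for all x ∈ [0,1], so that φ is strictly increasing on [0,1]. -/

import Mathlib

open Real Set

/-- Let `β > 0`, `κ > 0` and let `φ : [0,1] → ℝ` be a `C²` function
(with first derivative `φ'` and second derivative `φ''`) satisfying
`φ'' = β⁻² sin φ cos φ` on `(0,1)`, `φ 0 = 0` and `φ' 1 = 2κ`.  Then the first integral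
`φ'(x)² = β⁻² sin²(φ x) + φ'(0)²` holds on `[0,1]`, `φ'(0) ≠ 0`, `φ' > 0` on `[0,1]`,
and `φ` is strictly increasing on `[0,1]`. -/
theorem stmt0 (β κ : ℝ) (hβ : 0 < β) (hκ : 0 < κ)
    (φ φ' φ'' : ℝ → ℝ)
    (hd1 : ∀ x ∈ Icc (0:ℝ) 1, HasDerivAt φ (φ' x) x)
    (hd2 : ∀ x ∈ Icc (0:ℝ) 1, HasDerivAt φ' (φ'' x) x)
    (hC2 : ContinuousOn φ'' (Icc (0:ℝ) 1))
    (hode : ∀ x ∈ Ioo (0:ℝ) 1,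
      φ'' x = (1 / β ^ 2) * Real.sin (φ x) * Real.cos (φ x))
    (h0 : φ 0 = 0) (h1 : φ' 1 = 2 * κ) :
    (∀ x ∈ Icc (0:ℝ) 1,
        (φ' x) ^ 2 = (1 / β ^ 2) * Real.sin (φ x) ^ 2 + (φ' 0) ^ 2) ∧
      φ' 0 ≠ 0 ∧ (∀ x ∈ Icc (0:ℝ) 1, 0 < φ' x) ∧
      StrictMonoOn φ (Icc (0:ℝ) 1) := by
  have hφcont : ContinuousOn φ (Icc (0:ℝ) 1) :=
    fun x hx => (hd1 x hx).continuousAt.continuousWithinAt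
  have hφ'cont : ContinuousOn φ' (Icc (0:ℝ) 1) :=
    fun x hx => (hd2 x hx).continuousAt.continuousWithinAt
  -- extend the ODE to the closed interval by continuity
  have hode' : ∀ x ∈ Icc (0:ℝ) 1,
      φ'' x = (1 / β ^ 2) * Real.sin (φ x) * Real.cos (φ x) := by
    intro x hx
    set g : ℝ → ℝ := fun y => φ'' y - (1 / β ^ 2) * Real.sin (φ y) * Real.cos (φ y) with hg
    have hgcont : ContinuousOn g (Icc (0:ℝ) 1) := by
      apply hC2.sub
      exact (continuousOn_const.mul (Real.continuous_sin.comp_continuousOn hφcont)).mul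
        (Real.continuous_cos.comp_continuousOn hφcont)
    have hcl : x ∈ closure (Ioo (0:ℝ) 1) := by
      rwa [closure_Ioo (by norm_num : (0:ℝ) ≠ 1)]
    have hne : (nhdsWithin x (Ioo (0:ℝ) 1)).NeBot :=
      mem_closure_iff_nhdsWithin_neBot.mp hcl
    have ht1 : Filter.Tendsto g (nhdsWithin x (Ioo (0:ℝ) 1)) (nhds (g x)) :=
      ((hgcont x hx).mono Ioo_subset_Icc_self)
    have ht2 : Filter.Tendsto g (nhdsWithin x (Ioo (0:ℝ) 1)) (nhds 0) := by
      apply Filter.Tendsto.congr' _ tendsto_const_nhds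
      filter_upwards [self_mem_nhdsWithin] with y hy
      simp [hg, hode y hy]
    have : g x = 0 := tendsto_nhds_unique ht1 ht2
    have := this
    simp only [hg, sub_eq_zero] at this
    exact this
  -- first integral
  set E : ℝ → ℝ := fun x => (φ' x) ^ 2 - (1 / β ^ 2) * Real.sin (φ x) ^ 2 with hE
  have hEcont : ContinuousOn E (Icc (0:ℝ) 1) := by
    apply (hφ'cont.pow 2).sub
    exact continuousOn_const.mul ((Real.continuous_sin.comp_continuousOn hφcont).pow 2)
  have hEderiv : ∀ x ∈ Ico (0:ℝ) 1, HasDerivWithinAt E 0 (Ici x) x := by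
    intro x hx
    have hxI : x ∈ Icc (0:ℝ) 1 := Ico_subset_Icc_self hx
    have hs : HasDerivAt (fun y => Real.sin (φ y)) (Real.cos (φ x) * φ' x) x :=
      (Real.hasDerivAt_sin (φ x)).comp x (hd1 x hxI)
    have hD : HasDerivAt E
        (2 * φ' x * φ'' x -
          (1 / β ^ 2) * (2 * Real.sin (φ x) * (Real.cos (φ x) * φ' x))) x := by
      have h2 : HasDerivAt (fun y => (φ' y) ^ 2) (2 * φ' x * φ'' x) x := by
        simpa [Pi.pow_def, mul_comm, mul_assoc, mul_left_comm] using
          ((hd2 x hxI).pow 2)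
      have h3 : HasDerivAt (fun y => Real.sin (φ y) ^ 2)
          (2 * Real.sin (φ x) * (Real.cos (φ x) * φ' x)) x := by
        simpa [Pi.pow_def, mul_comm, mul_assoc, mul_left_comm] using hs.pow 2
      exact h2.sub (h3.const_mul ((1:ℝ) / β ^ 2))
    have hzero : 2 * φ' x * φ'' x -
        (1 / β ^ 2) * (2 * Real.sin (φ x) * (Real.cos (φ x) * φ' x)) = 0 := by
      rw [hode' x hxI]; ring
    rw [hzero] at hD
    exact hD.hasDerivWithinAt
  have hEconst : ∀ x ∈ Icc (0:ℝ) 1, E x = E 0 :=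
    constant_of_has_deriv_right_zero hEcont hEderiv
  have hfirst : ∀ x ∈ Icc (0:ℝ) 1,
      (φ' x) ^ 2 = (1 / β ^ 2) * Real.sin (φ x) ^ 2 + (φ' 0) ^ 2 := by
    intro x hx
    have := hEconst x hx
    simp only [hE, h0, Real.sin_zero] at this
    nlinarith [this]
  -- φ' 0 ≠ 0
  have hne0 : φ' 0 ≠ 0 := by
    intro hz
    -- Gronwall: φ ≡ 0
    have hbound : ∀ x ∈ Ico (0:ℝ) 1, ‖φ' x‖ ≤ (1 / β) * ‖φ x‖ + 0 := by
      intro x hx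
      have hxI : x ∈ Icc (0:ℝ) 1 := Ico_subset_Icc_self hx
      have h := hfirst x hxI
      rw [hz] at h
      have hsin : Real.sin (φ x) ^ 2 ≤ (φ x) ^ 2 := Real.sin_sq_le_sq
      have hβ2 : (0:ℝ) < β ^ 2 := by positivity
      have : (φ' x) ^ 2 ≤ (1 / β ^ 2) * (φ x) ^ 2 := by
        rw [h]; simp only [ne_eq, OfNat.ofNat_ne_zero, not_false_eq_true, zero_pow, add_zero]
        exact mul_le_mul_of_nonneg_left hsin (by positivity)
      have habs : |φ' x| ≤ (1 / β) * |φ x| := by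
        have h1 : ((1 / β) * |φ x|) ^ 2 = (1 / β ^ 2) * (φ x) ^ 2 := by
          rw [mul_pow]; ring_nf; rw [sq_abs]
        nlinarith [abs_nonneg (φ' x), abs_nonneg (φ x), sq_abs (φ' x),
          mul_nonneg (le_of_lt (by positivity : (0:ℝ) < 1 / β)) (abs_nonneg (φ x))]
      simpa using habs
    have hgron := norm_le_gronwallBound_of_norm_deriv_right_le (δ := 0) (K := 1/β) (ε := 0) hφcont
      (fun x hx => (hd1 x (Ico_subset_Icc_self hx)).hasDerivWithinAt)
      (by simp [h0]) hbound
    have hφzero : ∀ x ∈ Icc (0:ℝ) 1, φ x = 0 := by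
      intro x hx
      have := hgron x hx
      rw [gronwallBound_ε0] at this
      simp only [Real.norm_eq_abs] at this
      have : |φ x| ≤ 0 := by simpa using this
      exact abs_eq_zero.mp (le_antisymm this (abs_nonneg _))
    have h1' := hfirst 1 (by norm_num)
    rw [hz, hφzero 1 (by norm_num), h1] at h1'
    simp at h1'
    nlinarith
  -- positivity of φ'
  have hnever : ∀ x ∈ Icc (0:ℝ) 1, φ' x ≠ 0 := by
    intro x hx hcontra
    have := hfirst x hx
    rw [hcontra] at this
    have hsq : (φ' 0) ^ 2 ≤ 0 := by nlinarith [mul_nonneg (by positivity : (0:ℝ) ≤ 1 / β ^ 2) (sq_nonneg (Real.sin (φ x)))]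
    exact hne0 (pow_eq_zero_iff two_ne_zero |>.mp (le_antisymm hsq (sq_nonneg _)))
  have hpos : ∀ x ∈ Icc (0:ℝ) 1, 0 < φ' x := by
    intro x hx
    by_contra hle
    push_neg at hle
    have hx1 : x ≤ 1 := hx.2
    have hcont' : ContinuousOn φ' (Icc x 1) :=
      hφ'cont.mono (Icc_subset_Icc hx.1 le_rfl)
    have h0mem : (0:ℝ) ∈ Icc (φ' x) (φ' 1) := by
      constructor
      · exact hle
      · rw [h1]; positivity
    obtain ⟨c, hc, hc0⟩ := intermediate_value_Icc hx1 hcont' h0mem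
    exact hnever c ⟨le_trans hx.1 hc.1, hc.2⟩ hc0
  refine ⟨hfirst, hne0, hpos, ?_⟩
  apply strictMonoOn_of_deriv_pos (convex_Icc 0 1) hφcont
  intro x hx
  rw [interior_Icc] at hx
  have hxI : x ∈ Icc (0:ℝ) 1 := Ioo_subset_Icc_self hx
  rw [(hd1 x hxI).deriv]
  exact hpos x hxI
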